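/- Let n ∈ ℕ, let L ⊆ {0,1}ⁿ be a language all of whose words have length exactly n, and let θ ∈ (0, 2]. Then for all u, v ∈ L and all p, q ∈ ℕ₀: if p ≠ q then lev_θ(u·(01)^{pn}, v·(01)^{qn}) = 2n·|p − q|, and if p = q then lev_θ(u·(01)^{pn}, v·(01)^{qn}) = lev_θ(u, v). -/

import Mathlib

/-- Cost structure for edit distances (formerly `Mathlib.Data.List.EditDistance.Defs`,
removed from Mathlib; reproduced with its old meaning). -/
structure Levenshtein.Cost (α β δ : Type*) where
  /-- Cost to delete an element from a list. -/
  delete : α → δ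
  /-- Cost in insert an element into a list. -/
  insert : β → δ
  /-- Cost to substitute one element for another in a list. -/
  substitute : α → β → δ

/-- (Internal implementation detail.) -/
def Levenshtein.impl {α β δ : Type*} [AddZeroClass δ] [Min δ] (C : Levenshtein.Cost α β δ)
    (xs : List α) (y : β) (d : {r : List δ // 0 < r.length}) : {r : List δ // 0 < r.length} :=
  let ⟨ds, w⟩ := d
  xs.zip (ds.zip ds.tail) |>.foldr
    (init := ⟨[C.insert y + ds.getLast (List.length_pos_iff.mp w)], by simp⟩)
    (fun ⟨x, d₀, d₁⟩ ⟨r, w⟩ =>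
      ⟨min (C.delete x + r[0]) (min (C.insert y + d₀) (C.substitute x y + d₁)) :: r, by simp⟩)

/-- `suffixLevenshtein C xs ys` computes the Levenshtein distance
(using the cost functions provided by a `C : Cost α β δ`)
from each suffix of the list `xs` to the list `ys`. -/
def suffixLevenshtein {α β δ : Type*} [AddZeroClass δ] [Min δ] (C : Levenshtein.Cost α β δ)
    (xs : List α) (ys : List β) : {r : List δ // 0 < r.length} :=
  ys.foldr
    (Levenshtein.impl C xs)
    (xs.foldr (init := ⟨[0], by simp⟩) (fun a ⟨r, w⟩ => ⟨(C.delete a + r[0]) :: r, by simp⟩))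

/-- `levenshtein C xs ys` computes the Levenshtein distance
(using the cost functions provided by a `C : Cost α β δ`)
from the list `xs` to the list `ys`. -/
def levenshtein {α β δ : Type*} [AddZeroClass δ] [Min δ] (C : Levenshtein.Cost α β δ)
    (xs : List α) (ys : List β) : δ :=
  let ⟨r, w⟩ := suffixLevenshtein C xs ys
  r[0]

namespace Levenshtein

variable {α β δ : Type*} [AddZeroClass δ] [Min δ] {C : Levenshtein.Cost α β δ}

theorem impl_cons' (x : α) (xs : List α) (y : β) (d : δ) (ds : List δ) (w) (w' : 0 < List.length ds) :
    impl C (x :: xs) y ⟨d :: ds, w⟩ =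
      let ⟨r, w⟩ := impl C xs y ⟨ds, w'⟩
      ⟨min (C.delete x + r[0]) (min (C.insert y + d) (C.substitute x y + ds[0])) :: r, by simp⟩ :=
  match ds, w' with | _ :: _, _ => rfl

theorem impl_cons_fst_zero' (x : α) (xs : List α) (y : β) (d : δ) (ds : List δ) (w) (h)
    (w' : 0 < List.length ds) :
    (impl C (x :: xs) y ⟨d :: ds, w⟩).1[0]'h =
      let ⟨r, w⟩ := impl C xs y ⟨ds, w'⟩
      min (C.delete x + r[0]) (min (C.insert y + d) (C.substitute x y + ds[0])) :=
  match ds, w' with | _ :: _, _ => rfl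

theorem impl_length' (xs : List α) (y : β) (d : {r : List δ // 0 < r.length})
    (w : d.1.length = xs.length + 1) :
    (impl C xs y d).1.length = xs.length + 1 := by
  induction xs generalizing d with
  | nil => rfl
  | cons x xs ih =>
    dsimp [impl]
    match d, w with
    | ⟨d₁ :: d₂ :: ds, _⟩, w =>
      dsimp
      congr 1
      exact ih ⟨d₂ :: ds, (by simp)⟩ (by simpa using w)

end Levenshtein

section levaux

variable {α β δ : Type*} [AddZeroClass δ] [Min δ] {C : Levenshtein.Cost α β δ}

theorem suffixLevenshtein_length' (xs : List α) (ys : List β) :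
    (suffixLevenshtein C xs ys).1.length = xs.length + 1 := by
  induction ys with
  | nil =>
    dsimp [suffixLevenshtein]
    induction xs with
    | nil => rfl
    | cons _ xs ih =>
      simp_all
  | cons y ys ih =>
    dsimp [suffixLevenshtein]
    rw [Levenshtein.impl_length']
    exact ih

theorem suffixLevenshtein_cons₂' (xs : List α) (y : β) (ys : List β) :
    suffixLevenshtein C xs (y :: ys) = (Levenshtein.impl C xs) y (suffixLevenshtein C xs ys) :=
  rfl

theorem suffixLevenshtein_cons₁_aux' {α} {x y : {r : List α // 0 < r.length}}
    (w₀ : x.1[0]'x.2 = y.1[0]'y.2) (w : x.1.tail = y.1.tail) : x = y := by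
  match x, y with
  | ⟨hx :: tx, _⟩, ⟨hy :: ty, _⟩ => simp_all

theorem suffixLevenshtein_cons₁' (x : α) (xs : List α) (ys : List β) :
    suffixLevenshtein C (x :: xs) ys =
      ⟨levenshtein C (x :: xs) ys ::
        (suffixLevenshtein C xs ys).1, by simp⟩ := by
  induction ys with
  | nil =>
    dsimp [levenshtein, suffixLevenshtein]
    rfl
  | cons y ys ih =>
    apply suffixLevenshtein_cons₁_aux'
    · rfl
    · rw [suffixLevenshtein_cons₂' (x :: xs), ih, Levenshtein.impl_cons']
      · rfl
      · simp [suffixLevenshtein_length']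

theorem suffixLevenshtein_cons_cons_fst_get_zero' (x : α) (xs : List α) (y : β) (ys : List β) (w) :
    (suffixLevenshtein C (x :: xs) (y :: ys)).1[0]'w =
      let ⟨dx, _⟩ := suffixLevenshtein C xs (y :: ys)
      let ⟨dy, _⟩ := suffixLevenshtein C (x :: xs) ys
      let ⟨dxy, _⟩ := suffixLevenshtein C xs ys
      min
        (C.delete x + dx[0])
        (min
          (C.insert y + dy[0])
          (C.substitute x y + dxy[0])) := by
  conv =>
    lhs
    dsimp only [suffixLevenshtein_cons₂']
  simp only [suffixLevenshtein_cons₁']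
  rw [Levenshtein.impl_cons_fst_zero']
  rfl

@[simp]
theorem levenshtein_nil_nil : levenshtein C [] [] = 0 := by
  simp [levenshtein, suffixLevenshtein]

@[simp]
theorem levenshtein_nil_cons (y : β) (ys : List β) :
    levenshtein C [] (y :: ys) = C.insert y + levenshtein C [] ys := by
  have hl := suffixLevenshtein_length' (C := C) [] ys
  simp only [List.length_nil, zero_add] at hl
  unfold levenshtein
  rw [suffixLevenshtein_cons₂']
  generalize suffixLevenshtein C [] ys = d at hl ⊢
  obtain ⟨l, w⟩ := d
  match l, w, hl with
  | [a], _, _ => rfl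

@[simp]
theorem levenshtein_cons_nil (x : α) (xs : List α) :
    levenshtein C (x :: xs) ([] : List β) = C.delete x + levenshtein C xs ([] : List β) :=
  rfl

@[simp]
theorem levenshtein_cons_cons (x : α) (xs : List α) (y : β) (ys : List β) :
    levenshtein C (x :: xs) (y :: ys) =
      min (C.delete x + levenshtein C xs (y :: ys))
        (min (C.insert y + levenshtein C (x :: xs) ys)
          (C.substitute x y + levenshtein C xs ys)) :=
  suffixLevenshtein_cons_cons_fst_get_zero' ..

end levaux

/-- Cost structure for the generalized Levenshtein distance:
insertions and deletions cost `γ`, substitutions cost `θ`. -/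
def levCost (A : Type*) [DecidableEq A] (γ θ : ℝ) : Levenshtein.Cost A A ℝ where
  delete _ := γ
  insert _ := γ
  substitute a b := if a = b then 0 else θ

/-- The generalized Levenshtein distance `lev_{γ,θ}` between two words over `A`:
the minimal total cost of transforming one word into the other by insertions and
deletions (of cost `γ`) and substitutions (of cost `θ`). -/
def lev {A : Type*} [DecidableEq A] (γ θ : ℝ) (u v : List A) : ℝ :=
  levenshtein (levCost A γ θ) u v

/-- The isometry group of a language `L ⊆ A*` with respect to a distance `d` on `A*`:
the group (under composition) of bijections of `L` preserving `d`. -/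
def IsomGroup {A : Type*} (d : List A → List A → ℝ) (L : Set (List A)) :
    Subgroup (Equiv.Perm L) where
  carrier := {φ : Equiv.Perm L | ∀ u v : L, d (φ u) (φ v) = d u v}
  one_mem' := by intro u v; rfl
  mul_mem' := by intro φ ψ hφ hψ u v; simp only [Equiv.Perm.mul_apply]; rw [hφ, hψ]
  inv_mem' := by
    intro φ hφ u v
    have h := hφ (φ⁻¹ u) (φ⁻¹ v)
    simpa using h.symm

/-- The word `(01)ᵏ` over `{0,1}` (with `0 = false`, `1 = true`). -/
def pat (k : ℕ) : List Bool := (List.replicate k [false, true]).flatten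


open List

section helpers

variable {A : Type*} [DecidableEq A] {θ : ℝ}

lemma lev_nil_left (y : List A) : lev 1 θ [] y = y.length := by
  induction y with
  | nil => simp [lev]
  | cons b ys ih =>
    simp only [lev, levCost, levenshtein_nil_cons] at *
    rw [ih]; push_cast [List.length_cons]; ring

lemma lev_nil_right (x : List A) : lev 1 θ x [] = x.length := by
  induction x with
  | nil => simp [lev]
  | cons a xs ih =>
    simp only [lev, levCost, levenshtein_cons_nil] at *
    rw [ih]; push_cast [List.length_cons]; ring

lemma lev_cons_cons (a b : A) (x y : List A) :
    lev 1 θ (a :: x) (b :: y) =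
      min (1 + lev 1 θ x (b :: y))
        (min (1 + lev 1 θ (a :: x) y)
          ((if a = b then 0 else θ) + lev 1 θ x y)) := by
  simp [lev, levCost]

lemma subst_nonneg (hθ : 0 ≤ θ) (a b : A) : (0 : ℝ) ≤ if a = b then 0 else θ := by
  split <;> simp [hθ]

lemma abs_len_le_lev (hθ : 0 ≤ θ) : ∀ x y : List A,
    |(x.length : ℝ) - y.length| ≤ lev 1 θ x y
  | [], y => by rw [lev_nil_left]; simp
  | a :: xs, [] => by
    rw [lev_nil_right]
    simp only [List.length_nil, Nat.cast_zero, sub_zero]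
    exact (abs_of_nonneg (by positivity)).le
  | a :: xs, b :: ys => by
    have h1 := abs_len_le_lev hθ xs (b :: ys)
    have h2 := abs_len_le_lev hθ (a :: xs) ys
    have h3 := abs_len_le_lev hθ xs ys
    have hnn := subst_nonneg hθ a b
    rw [lev_cons_cons]
    push_cast [List.length_cons] at h1 h2 h3 ⊢
    rw [abs_le] at h1 h2 h3 ⊢
    obtain ⟨h1a, h1b⟩ := h1; obtain ⟨h2a, h2b⟩ := h2; obtain ⟨h3a, h3b⟩ := h3
    constructor
    · rw [neg_le]
      refine le_min ?_ (le_min ?_ ?_) <;> linarith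
    · refine le_min ?_ (le_min ?_ ?_) <;> linarith
termination_by x y => x.length + y.length

lemma lev_nonneg (hθ : 0 ≤ θ) (x y : List A) : 0 ≤ lev 1 θ x y :=
  le_trans (abs_nonneg _) (abs_len_le_lev hθ x y)

lemma lev_append_single (hθ : 0 ≤ θ) (c : A) : ∀ x y : List A,
    lev 1 θ (x ++ [c]) (y ++ [c]) = lev 1 θ x y
  | [], [] => by
    simp only [List.nil_append]
    rw [lev_cons_cons, lev_nil_left, lev_nil_right]
    simp [lev]
  | [], b :: ys => by
    have ih := lev_append_single hθ c [] ys
    have hnn := subst_nonneg hθ c b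
    simp only [List.nil_append, List.cons_append] at *
    rw [lev_cons_cons, lev_nil_left, lev_nil_left, ih, lev_nil_left, lev_nil_left]
    push_cast [List.length_append, List.length_cons]
    apply _root_.le_antisymm
    · refine (min_le_right _ _).trans ((min_le_left _ _).trans ?_)
      linarith
    · exact le_min (by linarith) (le_min (by linarith) (by linarith))
  | a :: xs, [] => by
    have ih := lev_append_single hθ c xs []
    have hnn := subst_nonneg hθ a c
    simp only [List.nil_append, List.cons_append] at *
    rw [lev_cons_cons, lev_nil_right, lev_nil_right, ih, lev_nil_right, lev_nil_right]
    push_cast [List.length_append, List.length_cons]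
    apply _root_.le_antisymm
    · refine (min_le_left _ _).trans ?_
      linarith
    · exact le_min (by linarith) (le_min (by linarith) (by linarith))
  | a :: xs, b :: ys => by
    have ih1 := lev_append_single hθ c xs (b :: ys)
    have ih2 := lev_append_single hθ c (a :: xs) ys
    have ih3 := lev_append_single hθ c xs ys
    simp only [List.cons_append] at *
    rw [lev_cons_cons, lev_cons_cons, ih1, ih2, ih3]
termination_by x y => x.length + y.length

lemma lev_append_word (hθ : 0 ≤ θ) (w : List A) : ∀ x y : List A,
    lev 1 θ (x ++ w) (y ++ w) = lev 1 θ x y := by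
  induction w with
  | nil => intro x y; simp
  | cons c w ih =>
    intro x y
    have h := ih (x ++ [c]) (y ++ [c])
    rw [List.append_assoc, List.append_assoc] at h
    simpa using h.trans (lev_append_single hθ c x y)

lemma lev_cons_left_le (a : A) (x y : List A) :
    lev 1 θ (a :: x) y ≤ 1 + lev 1 θ x y := by
  cases y with
  | nil => rw [lev_nil_right, lev_nil_right]; push_cast [List.length_cons]; linarith
  | cons b ys => rw [lev_cons_cons]; exact min_le_left _ _

lemma lev_cons_right_le (b : A) (x y : List A) :
    lev 1 θ x (b :: y) ≤ 1 + lev 1 θ x y := by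
  cases x with
  | nil => rw [lev_nil_left, lev_nil_left]; push_cast [List.length_cons]; linarith
  | cons a xs => rw [lev_cons_cons]; exact (min_le_right _ _).trans (min_le_left _ _)

lemma lev_diag_le (a : A) (x y : List A) :
    lev 1 θ (a :: x) (a :: y) ≤ lev 1 θ x y := by
  rw [lev_cons_cons]
  refine (min_le_right _ _).trans ((min_le_right _ _).trans ?_)
  simp

lemma lev_le_of_sublist {x y : List A} (h : y <+ x) :
    lev 1 θ x y ≤ (x.length : ℝ) - y.length := by
  induction h with
  | slnil => simp [lev, levenshtein_nil_nil]
  | cons a h ih =>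
    refine (lev_cons_left_le a _ _).trans ?_
    push_cast [List.length_cons]; linarith
  | cons_cons a h ih =>
    refine (lev_diag_le a _ _).trans ?_
    push_cast [List.length_cons]; linarith

lemma lev_le_of_sublist' {x y : List A} (h : x <+ y) :
    lev 1 θ x y ≤ (y.length : ℝ) - x.length := by
  induction h with
  | slnil => simp [lev, levenshtein_nil_nil]
  | cons a h ih =>
    refine (lev_cons_right_le a _ _).trans ?_
    push_cast [List.length_cons]; linarith
  | cons_cons a h ih =>
    refine (lev_diag_le a _ _).trans ?_
    push_cast [List.length_cons]; linarith

end helpers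

lemma pat_succ (k : ℕ) : pat (k + 1) = [false, true] ++ pat k := by
  simp [pat, List.replicate_succ]

lemma pat_length (k : ℕ) : (pat k).length = 2 * k := by
  induction k with
  | zero => simp [pat]
  | succ k ih => rw [pat_succ, List.length_append, ih]; simp; ring

lemma pat_add (a b : ℕ) : pat (a + b) = pat a ++ pat b := by
  induction a with
  | zero => simp [pat]
  | succ a ih =>
    rw [show a + 1 + b = (a + b) + 1 by omega, pat_succ, pat_succ, ih, List.append_assoc]

lemma sublist_pat : ∀ w : List Bool, w <+ pat w.length
  | [] => by simp [pat]
  | c :: w => by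
    rw [List.length_cons, pat_succ]
    have ih := sublist_pat w
    cases c with
    | false => exact (ih.cons true).cons₂ false
    | true => exact (ih.cons₂ true).cons false

lemma pat_sublist {a b : ℕ} (h : a ≤ b) : pat a <+ pat b := by
  obtain ⟨k, rfl⟩ := Nat.exists_eq_add_of_le h
  rw [pat_add]
  exact List.sublist_append_left _ _

/-- For `L ⊆ {0,1}ⁿ`, `θ ∈ (0, 2]`, `u, v ∈ L`, and `p, q ∈ ℕ₀`:
if `p ≠ q` then `lev_θ(u·(01)^{pn}, v·(01)^{qn}) = 2n|p - q|`, and if `p = q` then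
`lev_θ(u·(01)^{pn}, v·(01)^{qn}) = lev_θ(u, v)`. -/
theorem stmt_16 (n : ℕ) (L : Set (List Bool)) (hL : ∀ w ∈ L, w.length = n)
    (θ : ℝ) (hθ : θ ∈ Set.Ioc (0 : ℝ) 2)
    (u v : List Bool) (hu : u ∈ L) (hv : v ∈ L) (p q : ℕ) :
    (p ≠ q →
      lev 1 θ (u ++ pat (p * n)) (v ++ pat (q * n)) = 2 * n * |(p : ℝ) - (q : ℝ)|) ∧
    (p = q →
      lev 1 θ (u ++ pat (p * n)) (v ++ pat (q * n)) = lev 1 θ u v) := by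
  have hθ0 : (0 : ℝ) ≤ θ := hθ.1.le
  have hul : u.length = n := hL u hu
  have hvl : v.length = n := hL v hv
  have len1 : ((u ++ pat (p * n)).length : ℝ) = n + 2 * (p * n) := by
    rw [List.length_append, hul, pat_length]; push_cast; ring
  have len2 : ((v ++ pat (q * n)).length : ℝ) = n + 2 * (q * n) := by
    rw [List.length_append, hvl, pat_length]; push_cast; ring
  have hsub : ∀ (x y : List Bool) (r s : ℕ), y.length = n → s < r →
      y ++ pat (s * n) <+ x ++ pat (r * n) := by
    intro x y r s hy hrs
    have h1 : y <+ pat n := by rw [← hy]; exact sublist_pat y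
    have h2 : y ++ pat (s * n) <+ pat (n + s * n) := by
      rw [pat_add]; exact h1.append (List.Sublist.refl _)
    have h3 : pat (n + s * n) <+ pat (r * n) :=
      pat_sublist (by nlinarith [Nat.succ_le_of_lt hrs])
    exact (h2.trans h3).trans (List.sublist_append_right x _)
  have hlb := abs_len_le_lev hθ0 (u ++ pat (p * n)) (v ++ pat (q * n))
  rw [len1, len2] at hlb
  constructor
  · intro hpq
    rcases Nat.lt_or_ge p q with h | h
    · have hub := lev_le_of_sublist' (θ := θ) (hsub v u q p hul h)
      rw [len1, len2] at hub
      have hpq' : (p : ℝ) ≤ q := by exact_mod_cast h.le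
      have habs : |(p : ℝ) - q| = (q : ℝ) - p := by
        rw [abs_sub_comm]; exact abs_of_nonneg (by linarith)
      rw [abs_le] at hlb
      rw [habs]
      have e : (n : ℝ) + 2 * (q * n) - ((n : ℝ) + 2 * (p * n)) = 2 * n * ((q : ℝ) - p) := by
        ring
      obtain ⟨hlb1, hlb2⟩ := hlb
      linarith
    · have h' : q < p := lt_of_le_of_ne h (fun e => hpq e.symm)
      have hub := lev_le_of_sublist (θ := θ) (hsub u v p q hvl h')
      rw [len1, len2] at hub
      have hpq' : (q : ℝ) ≤ p := by exact_mod_cast h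
      have habs : |(p : ℝ) - q| = (p : ℝ) - q := abs_of_nonneg (by linarith)
      rw [abs_le] at hlb
      rw [habs]
      have e : (n : ℝ) + 2 * (p * n) - ((n : ℝ) + 2 * (q * n)) = 2 * n * ((p : ℝ) - q) := by
        ring
      obtain ⟨hlb1, hlb2⟩ := hlb
      linarith
  · intro hpq
    subst hpq
    exact lev_append_word hθ0 (pat (p * n)) u v
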